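/- Let ε > 0, η > 1, μ > 0, ν > 0, l > 0 and δ ≥ 0, and set k_m = exp(−δ²/(2l²)). Let m ∈ ℝ and V > 0 satisfy |m| ≤ k_m·μ, V > 1 − k_m²·ν, k_m²·ν < 1, and Φ(−(|m| + ε)/√V) = Φ(−ηε). Then δ < β·l, where β = √(2·log((μ² + η²ε²ν)/(ηε·√(μ² + (η² − 1)ε²ν) − εμ))). (This is Theorems 3 and 4 of the paper: the distance δ between an optimal query and its nearest labeled sample satisfies δ < βl, in particular during the exploration stage δ < δ_explore = βl.) -/

import Mathlib

/-- The cumulative distribution function of the standard Gaussian distribution `N(0,1)`. -/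
noncomputable def stdGaussianCDF : ℝ → ℝ :=
  fun x => ProbabilityTheory.cdf (ProbabilityTheory.gaussianReal 0 1) x

open MeasureTheory ProbabilityTheory in
lemma stdGaussianCDF_strictMono : StrictMono stdGaussianCDF := by
  intro a b hab
  unfold stdGaussianCDF
  rw [ProbabilityTheory.cdf_eq_real, ProbabilityTheory.cdf_eq_real]
  have hIoc : gaussianReal 0 1 (Set.Ioc a b) ≠ 0 := by
    intro h0
    have hvol := (gaussianReal_absolutelyContinuous' 0 (v := 1) one_ne_zero) h0
    rw [Real.volume_Ioc] at hvol
    simp only [ENNReal.ofReal_eq_zero, sub_nonpos] at hvol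
    exact absurd hvol (not_le.mpr hab)
  have hunion : gaussianReal 0 1 (Set.Iic b) =
      gaussianReal 0 1 (Set.Iic a) + gaussianReal 0 1 (Set.Ioc a b) := by
    rw [← MeasureTheory.measure_union (Set.Iic_disjoint_Ioc le_rfl) measurableSet_Ioc,
      Set.Iic_union_Ioc_eq_Iic hab.le]
  have hfin : gaussianReal 0 1 (Set.Iic a) ≠ ⊤ := measure_ne_top _ _
  have hfinb : gaussianReal 0 1 (Set.Iic b) ≠ ⊤ := measure_ne_top _ _
  have hlt : gaussianReal 0 1 (Set.Iic a) < gaussianReal 0 1 (Set.Iic b) := by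
    rw [hunion]
    exact ENNReal.lt_add_right hfin hIoc
  exact (ENNReal.toReal_lt_toReal hfin hfinb).mpr hlt

set_option maxHeartbeats 1000000 in
/-- Theorems 3 and 4 of the paper: with `k_m = exp(−δ²/(2l²))`, if the posterior mean `m`
and variance `V` at the optimal query satisfy `|m| ≤ k_m·μ`, `V > 1 − k_m²·ν`,
`k_m²·ν < 1`, and `Φ(−(|m| + ε)/√V) = Φ(−ηε)`, then the distance `δ` between the optimal
query and its nearest labeled sample satisfies `δ < β·l`, where
`β = √(2·log((μ² + η²ε²ν)/(ηε·√(μ² + (η² − 1)ε²ν) − εμ)))`. -/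
theorem query_distance_bound
    (ε η μ ν l δ m V : ℝ)
    (hε : 0 < ε) (hη : 1 < η) (hμ : 0 < μ) (hν : 0 < ν) (hl : 0 < l) (hδ : 0 ≤ δ)
    (hV : 0 < V)
    (hm : |m| ≤ Real.exp (-δ ^ 2 / (2 * l ^ 2)) * μ)
    (hVlb : 1 - (Real.exp (-δ ^ 2 / (2 * l ^ 2))) ^ 2 * ν < V)
    (hkν : (Real.exp (-δ ^ 2 / (2 * l ^ 2))) ^ 2 * ν < 1)
    (hΦ : stdGaussianCDF (-(|m| + ε) / Real.sqrt V) = stdGaussianCDF (-(η * ε))) :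
    δ < Real.sqrt (2 * Real.log ((μ ^ 2 + η ^ 2 * ε ^ 2 * ν) /
      (η * ε * Real.sqrt (μ ^ 2 + (η ^ 2 - 1) * ε ^ 2 * ν) - ε * μ))) * l := by
  obtain ⟨k, hkdef⟩ : ∃ k, Real.exp (-δ ^ 2 / (2 * l ^ 2)) = k := ⟨_, rfl⟩
  rw [hkdef] at hm hVlb hkν
  have hk0 : 0 < k := hkdef ▸ Real.exp_pos _
  have hη2 : 1 < η ^ 2 := by nlinarith
  have habs : 0 ≤ |m| := abs_nonneg m
  -- from injectivity of the cdf
  have heq0 : -(|m| + ε) / Real.sqrt V = -(η * ε) := stdGaussianCDF_strictMono.injective hΦ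
  obtain ⟨s, hsdef⟩ : ∃ s, Real.sqrt V = s := ⟨_, rfl⟩
  have hs : 0 < s := hsdef ▸ Real.sqrt_pos.mpr hV
  have hs2 : s ^ 2 = V := hsdef ▸ Real.sq_sqrt hV.le
  rw [hsdef] at heq0
  have heq : |m| + ε = η * ε * s := by
    field_simp at heq0
    linarith
  -- quadratic inequality in k
  have h1 : η ^ 2 * ε ^ 2 * (1 - k ^ 2 * ν) < η ^ 2 * ε ^ 2 * V :=
    mul_lt_mul_of_pos_left hVlb (by positivity)
  have h2 : η ^ 2 * ε ^ 2 * V = (|m| + ε) ^ 2 := by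
    rw [← hs2, heq]; ring
  have h3 : (|m| + ε) ^ 2 ≤ (k * μ + ε) ^ 2 := by nlinarith
  have hquad : 0 < (μ ^ 2 + η ^ 2 * ε ^ 2 * ν) * k ^ 2 + 2 * μ * ε * k
      - (η ^ 2 - 1) * ε ^ 2 := by nlinarith
  have hA : 0 < μ ^ 2 + η ^ 2 * ε ^ 2 * ν := by positivity
  have hS : 0 < μ ^ 2 + (η ^ 2 - 1) * ε ^ 2 * ν := by
    have := mul_pos (mul_pos (sub_pos.mpr hη2) (pow_pos hε 2)) hν
    nlinarith
  obtain ⟨t, htdef⟩ : ∃ t, Real.sqrt (μ ^ 2 + (η ^ 2 - 1) * ε ^ 2 * ν) = t := ⟨_, rfl⟩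
  have ht : 0 < t := htdef ▸ Real.sqrt_pos.mpr hS
  have ht2 : t ^ 2 = μ ^ 2 + (η ^ 2 - 1) * ε ^ 2 * ν := htdef ▸ Real.sq_sqrt hS.le
  rw [htdef]
  have hD : 0 < η * ε * t - ε * μ := by
    have htμ : μ < t := by
      by_contra h
      push_neg at h
      nlinarith [mul_pos (mul_pos (sub_pos.mpr hη2) (pow_pos hε 2)) hν,
        mul_nonneg (sub_nonneg.mpr h) (by positivity : (0:ℝ) ≤ μ + t)]
    have hηt : t < η * t := by nlinarith [mul_pos ht (sub_pos.mpr hη)]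
    nlinarith [mul_pos hε (sub_pos.mpr (htμ.trans hηt))]
  have hprod : 0 < ((μ ^ 2 + η ^ 2 * ε ^ 2 * ν) * k - (η * ε * t - ε * μ)) *
      ((μ ^ 2 + η ^ 2 * ε ^ 2 * ν) * k + (η * ε * t + ε * μ)) := by
    nlinarith [mul_pos hA hquad]
  have hAkE : 0 < (μ ^ 2 + η ^ 2 * ε ^ 2 * ν) * k + (η * ε * t + ε * μ) := by positivity
  have hAk : η * ε * t - ε * μ < (μ ^ 2 + η ^ 2 * ε ^ 2 * ν) * k := by
    by_contra h
    push_neg at h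
    nlinarith
  have hkk0 : (η * ε * t - ε * μ) / (μ ^ 2 + η ^ 2 * ε ^ 2 * ν) < k :=
    (div_lt_iff₀ hA).mpr (by linarith)
  have hDA : 0 < (η * ε * t - ε * μ) / (μ ^ 2 + η ^ 2 * ε ^ 2 * ν) := div_pos hD hA
  have hloglt : Real.log ((η * ε * t - ε * μ) / (μ ^ 2 + η ^ 2 * ε ^ 2 * ν)) <
      -δ ^ 2 / (2 * l ^ 2) := by
    have h := Real.log_lt_log hDA hkk0
    rwa [← hkdef, Real.log_exp] at h
  have hlogflip : Real.log ((η * ε * t - ε * μ) / (μ ^ 2 + η ^ 2 * ε ^ 2 * ν)) =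
      -Real.log ((μ ^ 2 + η ^ 2 * ε ^ 2 * ν) / (η * ε * t - ε * μ)) := by
    rw [← Real.log_inv, inv_div]
  rw [hlogflip] at hloglt
  have h2l : (0:ℝ) < 2 * l ^ 2 := by positivity
  have hL : δ ^ 2 / (2 * l ^ 2) <
      Real.log ((μ ^ 2 + η ^ 2 * ε ^ 2 * ν) / (η * ε * t - ε * μ)) := by
    rw [neg_div] at hloglt
    linarith
  have hLnn : 0 ≤ 2 * Real.log ((μ ^ 2 + η ^ 2 * ε ^ 2 * ν) / (η * ε * t - ε * μ)) := by
    have : 0 ≤ δ ^ 2 / (2 * l ^ 2) := by positivity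
    linarith
  have hd2 : δ ^ 2 < 2 * Real.log ((μ ^ 2 + η ^ 2 * ε ^ 2 * ν) / (η * ε * t - ε * μ)) * l ^ 2 := by
    have h := (div_lt_iff₀ h2l).mp hL
    nlinarith
  calc δ = Real.sqrt (δ ^ 2) := (Real.sqrt_sq hδ).symm
    _ < Real.sqrt (2 * Real.log ((μ ^ 2 + η ^ 2 * ε ^ 2 * ν) / (η * ε * t - ε * μ)) * l ^ 2) :=
        Real.sqrt_lt_sqrt (by positivity) hd2
    _ = Real.sqrt (2 * Real.log ((μ ^ 2 + η ^ 2 * ε ^ 2 * ν) / (η * ε * t - ε * μ))) * l := by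
        rw [Real.sqrt_mul hLnn, Real.sqrt_sq hl.le]
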